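/- arXiv:2406.18433 — 4 statements merged into one kernel-verified Lean document; each statement's English description precedes it below -/
import Mathlib

section
/- Let 0 < μ ≤ γ, β = (1/5)√(μ/γ), and C = √(β² + (1+β)μ/γ). If a sequence satisfies γ_0 ≥ ((C-β)/(C+β))·μ, α_k is the positive solution of 4α_k² = ((1-α_k)γ_k + α_k μ)/γ, and (1+β)γ_{k+1} = (1-α_k)γ_k + α_k μ, then γ_k ≥ ((C-β)/(C+β))·μ for all k ≥ 0. -/
theorem gamma_k_lower_bound
    (μ γ : ℝ) (hμ : 0 < μ) (hμγ : μ ≤ γ)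
    (β C : ℝ)
    (hβ : β = (1/5) * Real.sqrt (μ/γ))
    (hC : C = Real.sqrt (β^2 + (1+β) * (μ/γ)))
    (γseq α : ℕ → ℝ)
    (hγ0 : γseq 0 ≥ ((C - β)/(C + β)) * μ)
    (hα : ∀ k, α k ∈ Set.Ioo (0:ℝ) 1)
    (hαeq : ∀ k, 4 * γ * (α k)^2 = (1 - α k) * γseq k + α k * μ)
    (hγrec : ∀ k, (1 + β) * γseq (k+1) = (1 - α k) * γseq k + α k * μ) :
    ∀ k, γseq k ≥ ((C - β)/(C + β)) * μ := by
  have hγpos : 0 < γ := lt_of_lt_of_le hμ hμγ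
  have hq : 0 < μ/γ := div_pos hμ hγpos
  have hβpos : 0 < β := by
    rw [hβ]
    have := Real.sqrt_pos.mpr hq
    linarith
  have hC2 : C^2 = β^2 + (1+β) * (μ/γ) := by
    rw [hC, Real.sq_sqrt]
    nlinarith [hq, hβpos]
  have hCnn : 0 ≤ C := hC ▸ Real.sqrt_nonneg _
  have hβC : β < C := by nlinarith [hC2, mul_pos (show (0:ℝ) < 1+β by linarith) hq]
  have hkey : (C - β) * (C + β) * γ = (1 + β) * μ := by
    have h := hC2
    field_simp at h
    nlinarith [h]
  have hS : 0 < C + β := by linarith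
  have hD : 0 < C - β := by linarith
  intro k
  induction k with
  | zero => exact hγ0
  | succ n ih =>
    obtain ⟨ha0, ha1⟩ := hα n
    set a := α n with ha
    have hIH : (C - β) * μ ≤ γseq n * (C + β) := by
      rw [ge_iff_le, div_mul_eq_mul_div, div_le_iff₀ hS] at ih
      linarith
    have hquad := hαeq n
    have hint1 : (0:ℝ) ≤ (1 - a) * (γseq n * (C + β) - (C - β) * μ) :=
      mul_nonneg (by linarith) (by linarith)
    have hqS : 4 * γ * a^2 * (C + β) = ((1 - a) * γseq n + a * μ) * (C + β) := by
      rw [hquad]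
    have hstar : 4 * γ * (C + β) * a^2 - (C - β) * μ - 2 * a * β * μ ≥ 0 := by
      nlinarith [hint1, hqS]
    have hka : (C - β) * (C + β) * γ * a = (1 + β) * μ * a := by rw [hkey]
    have halb : a ≥ (C - β) / 2 := by
      by_contra h
      push_neg at h
      nlinarith [hstar, hka, mul_pos ha0 (show (0:ℝ) < (C-β)/2 - a by linarith),
        mul_pos hγpos hS, hμ]
    have hrec := hγrec n
    have hint2 : (0:ℝ) ≤ (2 * a - (C - β)) * (β * μ) :=
      mul_nonneg (by linarith) (by positivity)
    have heq : (1 + β) * (γseq (n+1) * (C + β) - (C - β) * μ) =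
        (1 - a) * (γseq n * (C + β) - (C - β) * μ) + (2 * a - (C - β)) * (β * μ) := by
      linear_combination (C + β) * hrec
    have hfin : 0 ≤ (1 + β) * (γseq (n+1) * (C + β) - (C - β) * μ) := by
      rw [heq]; exact add_nonneg hint1 hint2
    have hfin2 : 0 ≤ γseq (n+1) * (C + β) - (C - β) * μ :=
      nonneg_of_mul_nonneg_right hfin (by linarith)
    rw [ge_iff_le, div_mul_eq_mul_div, div_le_iff₀ hS]
    linarith
end

section
/- Let 0 < μ ≤ γ and β = (1/5)√(μ/γ). Then (√(β² + (1+β)μ/γ) - β)/2 ≥ (2/5)√(μ/γ). Consequently, any sequence α_k ≥ (√(β²+(1+β)μ/γ)-β)/2 satisfies Π_{i=0}^{k-1}(1-α_i) ≤ (1 - (2/5)√(μ/γ))^k. -/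
theorem alpha_lower_bound_and_rate
    (μ γ : ℝ) (hμ : 0 < μ) (hμγ : μ ≤ γ)
    (β : ℝ) (hβ : β = (1/5) * Real.sqrt (μ/γ))
    (α : ℕ → ℝ)
    (hα : ∀ k, α k ∈ Set.Ioo (0:ℝ) 1)
    (hαlb : ∀ k, α k ≥ (Real.sqrt (β^2 + (1+β) * (μ/γ)) - β)/2) :
    (Real.sqrt (β^2 + (1+β) * (μ/γ)) - β)/2 ≥ (2/5) * Real.sqrt (μ/γ) ∧
    ∀ k, ∏ i ∈ Finset.range k, (1 - α i) ≤ (1 - (2/5) * Real.sqrt (μ/γ))^k := by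
  have hγ : 0 < γ := lt_of_lt_of_le hμ hμγ
  have hr0 : 0 ≤ μ/γ := le_of_lt (div_pos hμ hγ)
  have hr1 : μ/γ ≤ 1 := (div_le_one hγ).mpr hμγ
  set s := Real.sqrt (μ/γ) with hs
  have hs0 : 0 ≤ s := Real.sqrt_nonneg _
  have hs1 : s ≤ 1 := Real.sqrt_le_one.mpr hr1
  have hsq : s^2 = μ/γ := Real.sq_sqrt hr0
  have hβnn : 0 ≤ β := by rw [hβ]; positivity
  have key : Real.sqrt (β^2 + (1+β) * (μ/γ)) ≥ s := by
    have harg : s^2 ≤ β^2 + (1+β) * (μ/γ) := by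
      rw [← hsq]; nlinarith [sq_nonneg β]
    calc s = Real.sqrt (s^2) := by rw [Real.sqrt_sq hs0]
    _ ≤ Real.sqrt (β^2 + (1+β) * (μ/γ)) := Real.sqrt_le_sqrt harg
  have h1 : (Real.sqrt (β^2 + (1+β) * (μ/γ)) - β)/2 ≥ (2/5) * s := by
    rw [hβ] at key ⊢
    linarith
  refine ⟨h1, ?_⟩
  intro k
  induction k with
  | zero => simp
  | succ n ih =>
    rw [Finset.prod_range_succ, pow_succ]
    have hαn := hα n
    have h1an : 1 - α n ≤ 1 - (2/5) * s := by
      have := le_trans h1 (hαlb n)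
      linarith
    have hprodnn : 0 ≤ ∏ i ∈ Finset.range n, (1 - α i) := by
      apply Finset.prod_nonneg
      intro i _
      have := (hα i).2
      linarith
    have hb : 0 ≤ 1 - α n := by linarith [hαn.2]
    calc (∏ i ∈ Finset.range n, (1 - α i)) * (1 - α n)
        ≤ (1 - (2/5) * s)^n * (1 - α n) := by
          apply mul_le_mul_of_nonneg_right ih hb
      _ ≤ (1 - (2/5) * s)^n * (1 - (2/5) * s) := by
          apply mul_le_mul_of_nonneg_left h1an
          apply pow_nonneg; linarith
end

section
/- For a symmetric matrix A with largest eigenvalue λ_1 and smallest eigenvalue λ_n, and any n×p matrix X with orthonormal columns and G with XᵀG = 0, the quadratic form 2⟨G, G XᵀAX - AG⟩ (the Riemannian Hessian of f(X) = -trace(XᵀAX)) is bounded above by 2(λ_1 - λ_n)‖G‖_F². -/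
open Matrix

theorem hessian_upper_bound
    (n p : ℕ)
    (A : Matrix (Fin n) (Fin n) ℝ) (hA : A.IsSymm)
    (lam1 lamn : ℝ)
    (hub : ∀ x : Fin n → ℝ, x ⬝ᵥ (A *ᵥ x) ≤ lam1 * (x ⬝ᵥ x))
    (hlb : ∀ x : Fin n → ℝ, lamn * (x ⬝ᵥ x) ≤ x ⬝ᵥ (A *ᵥ x))
    (X : Matrix (Fin n) (Fin p) ℝ) (hX : Xᵀ * X = 1)
    (G : Matrix (Fin n) (Fin p) ℝ) (hG : Xᵀ * G = 0) :
    2 * (Gᵀ * (G * (Xᵀ * A * X) - A * G)).trace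
      ≤ 2 * (lam1 - lamn) * (Gᵀ * G).trace := by
  set M := Xᵀ * A * X with hM
  -- quadratic form bound for M
  have hMform : ∀ v : Fin p → ℝ, v ⬝ᵥ (M *ᵥ v) ≤ lam1 * (v ⬝ᵥ v) := by
    intro v
    have h1 : v ⬝ᵥ (M *ᵥ v) = (X *ᵥ v) ⬝ᵥ (A *ᵥ (X *ᵥ v)) := by
      rw [hM, ← Matrix.mulVec_mulVec, ← Matrix.mulVec_mulVec,
        Matrix.dotProduct_mulVec, Matrix.vecMul_transpose]
    have h2 : (X *ᵥ v) ⬝ᵥ (X *ᵥ v) = v ⬝ᵥ v := by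
      rw [Matrix.dotProduct_mulVec, ← Matrix.mulVec_transpose,
        Matrix.mulVec_mulVec, hX, Matrix.one_mulVec]
    rw [h1, ← h2]
    exact hub (X *ᵥ v)
  -- trace identities
  have t1 : (Gᵀ * (G * M)).trace = ∑ i, (fun j => G i j) ⬝ᵥ (M *ᵥ fun j => G i j) := by
    simp only [Matrix.trace, Matrix.diag, Matrix.mul_apply, Matrix.transpose_apply,
      dotProduct, Matrix.mulVec, Finset.mul_sum, Finset.sum_mul]
    rw [Finset.sum_comm]
    apply Finset.sum_congr rfl
    intro i _
    rw [Finset.sum_comm]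
    apply Finset.sum_congr rfl
    intro j _
    apply Finset.sum_congr rfl
    intro k _
    ring
  have t2 : (Gᵀ * G).trace = ∑ i, (fun j => G i j) ⬝ᵥ (fun j => G i j) := by
    simp only [Matrix.trace, Matrix.diag, Matrix.mul_apply, Matrix.transpose_apply, dotProduct]
    rw [Finset.sum_comm]
  have t3 : (Gᵀ * (A * G)).trace = ∑ j, (fun i => G i j) ⬝ᵥ (A *ᵥ fun i => G i j) := by
    simp only [Matrix.trace, Matrix.diag, Matrix.mul_apply, Matrix.transpose_apply,
      dotProduct, Matrix.mulVec]
  have t4 : (Gᵀ * G).trace = ∑ j, (fun i => G i j) ⬝ᵥ (fun i => G i j) := by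
    simp only [Matrix.trace, Matrix.diag, Matrix.mul_apply, Matrix.transpose_apply, dotProduct]
  have key1 : (Gᵀ * (G * M)).trace ≤ lam1 * (Gᵀ * G).trace := by
    rw [t1, t2, Finset.mul_sum]
    exact Finset.sum_le_sum fun i _ => hMform _
  have key2 : lamn * (Gᵀ * G).trace ≤ (Gᵀ * (A * G)).trace := by
    rw [t3, t4, Finset.mul_sum]
    exact Finset.sum_le_sum fun j _ => hlb _
  have expand : (Gᵀ * (G * M - A * G)).trace
      = (Gᵀ * (G * M)).trace - (Gᵀ * (A * G)).trace := by
    rw [Matrix.mul_sub, Matrix.trace_sub]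
  rw [expand]
  nlinarith [key1, key2]
end

section
/- Geodesic cost restricted to a geodesic on the Grassmann manifold: if X has orthonormal columns, P = UΣVᵀ is a compact SVD of a tangent vector (XᵀP = 0, UᵀU = VᵀV = VVᵀ = I_p, Σ diagonal), and X(η) = XV cos(ηΣ)Vᵀ + U sin(ηΣ)Vᵀ, then -trace(X(η)ᵀ A X(η)) = -Σᵢ (cos²(ησᵢ)aᵢ + 2 sin(ησᵢ)cos(ησᵢ)bᵢ + sin²(ησᵢ)cᵢ), where aᵢ = (VᵀXᵀAXV)ᵢᵢ, bᵢ = (VᵀXᵀAU)ᵢᵢ, cᵢ = (UᵀAU)ᵢᵢ, and σᵢ = Σᵢᵢ. -/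
open Matrix

lemma tr_diag_mul {p : ℕ} (d e : Fin p → ℝ) (M : Matrix (Fin p) (Fin p) ℝ) :
    (Matrix.diagonal d * M * Matrix.diagonal e).trace = ∑ i, d i * M i i * e i := by
  simp [Matrix.trace, Matrix.diag, Matrix.mul_diagonal, Matrix.diagonal_mul]

theorem rayleigh_along_geodesic
    (n p : ℕ)
    (A : Matrix (Fin n) (Fin n) ℝ) (hA : A.IsSymm)
    (X U : Matrix (Fin n) (Fin p) ℝ) (V : Matrix (Fin p) (Fin p) ℝ)
    (σ : Fin p → ℝ)
    (hX : Xᵀ * X = 1) (hU : Uᵀ * U = 1) (hXU : Xᵀ * U = 0)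
    (hV : Vᵀ * V = 1) (hV' : V * Vᵀ = 1)
    (η : ℝ)
    (Xη : Matrix (Fin n) (Fin p) ℝ)
    (hXη : Xη = X * V * Matrix.diagonal (fun i => Real.cos (η * σ i)) * Vᵀ
                + U * Matrix.diagonal (fun i => Real.sin (η * σ i)) * Vᵀ) :
    -(Xηᵀ * A * Xη).trace =
      -∑ i : Fin p,
        (Real.cos (η * σ i)^2 * (Vᵀ * Xᵀ * A * X * V) i i
          + 2 * Real.sin (η * σ i) * Real.cos (η * σ i) * (Vᵀ * Xᵀ * A * U) i i
          + Real.sin (η * σ i)^2 * (Uᵀ * A * U) i i) := by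
  set C := Matrix.diagonal (fun i => Real.cos (η * σ i)) with hC
  set S := Matrix.diagonal (fun i => Real.sin (η * σ i)) with hS
  have hCT : Cᵀ = C := Matrix.diagonal_transpose _
  have hST : Sᵀ = S := Matrix.diagonal_transpose _
  have hAT : Aᵀ = A := hA
  -- expand
  have key : Xηᵀ * A * Xη =
      V * C * (Vᵀ * Xᵀ * A * X * V) * C * Vᵀ
      + V * C * (Vᵀ * Xᵀ * A * U) * S * Vᵀ
      + V * S * (Uᵀ * A * X * V) * C * Vᵀ
      + V * S * (Uᵀ * A * U) * S * Vᵀ := by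
    subst hXη
    simp only [Matrix.transpose_add, Matrix.transpose_mul, hCT, hST, Matrix.add_mul,
      Matrix.mul_add]
    simp only [Matrix.transpose_transpose, Matrix.mul_assoc]
    abel
  have cyc : ∀ M D E : Matrix (Fin p) (Fin p) ℝ,
      (V * D * M * E * Vᵀ).trace = (D * M * E).trace := by
    intro M D E
    have h1 : V * D * M * E * Vᵀ = V * (D * M * E * Vᵀ) := by
      simp only [Matrix.mul_assoc]
    rw [h1, Matrix.trace_mul_comm]
    simp only [Matrix.mul_assoc, hV, Matrix.mul_one]
  have hsymm : ∀ i, (Uᵀ * A * X * V) i i = (Vᵀ * Xᵀ * A * U) i i := by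
    intro i
    have : (Vᵀ * Xᵀ * A * U)ᵀ = Uᵀ * A * X * V := by
      simp only [Matrix.transpose_mul, Matrix.transpose_transpose, hAT, Matrix.mul_assoc]
    rw [← this]
    rfl
  rw [key]
  rw [Matrix.trace_add, Matrix.trace_add, Matrix.trace_add,
    cyc, cyc, cyc, cyc, hC, hS, tr_diag_mul, tr_diag_mul, tr_diag_mul, tr_diag_mul]
  rw [← Finset.sum_add_distrib, ← Finset.sum_add_distrib, ← Finset.sum_add_distrib]
  congr 1
  apply Finset.sum_congr rfl
  intro i _
  rw [hsymm i]
  ring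
end
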